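/- Let Γ : S¹ → ℝ² be a C² closed curve parameterized by arc length (|Γ'(s)| = 1 for all s) and let Φ : S¹ → ℝ² be a C² vector field along Γ. Then there exist a ∈ ℝ and b ∈ ℝ² such that Φ(s) = a·Γ(s)^⊥ + b for all s if and only if Φ'(s)·τ(s) = 0 for all s and d/ds(Φ'(s)·n(s)) = 0 for all s, where τ = Γ', n = τ^⊥, and (x,y)^⊥ = (−y,x). -/

import Mathlib

/-- Rotation by π/2: `(x,y)^⊥ = (-y,x)`. -/
def perp (v : ℝ × ℝ) : ℝ × ℝ := (-v.2, v.1)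

/-- Euclidean dot product on `ℝ × ℝ`. -/
def dot (v w : ℝ × ℝ) : ℝ := v.1 * w.1 + v.2 * w.2

private lemma hasDerivAt_fst' {f : ℝ → ℝ × ℝ} {v : ℝ × ℝ} {s : ℝ} (h : HasDerivAt f v s) :
    HasDerivAt (fun u => (f u).1) v.1 s :=
  (ContinuousLinearMap.fst ℝ ℝ ℝ).hasFDerivAt.comp_hasDerivAt s h

private lemma hasDerivAt_snd' {f : ℝ → ℝ × ℝ} {v : ℝ × ℝ} {s : ℝ} (h : HasDerivAt f v s) :
    HasDerivAt (fun u => (f u).2) v.2 s :=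
  (ContinuousLinearMap.snd ℝ ℝ ℝ).hasFDerivAt.comp_hasDerivAt s h

private lemma hasDerivAt_perp' {f : ℝ → ℝ × ℝ} {v : ℝ × ℝ} {s : ℝ} (h : HasDerivAt f v s) :
    HasDerivAt (fun u => perp (f u)) (perp v) s :=
  ((hasDerivAt_snd' h).neg).prodMk (hasDerivAt_fst' h)

private lemma hasDerivAt_dot' {f g : ℝ → ℝ × ℝ} {v w : ℝ × ℝ} {s : ℝ}
    (hf : HasDerivAt f v s) (hg : HasDerivAt g w s) :
    HasDerivAt (fun u => dot (f u) (g u))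
      (dot v (g s) + dot (f s) w) s := by
  have h1 := ((hasDerivAt_fst' hf).mul (hasDerivAt_fst' hg)).add
    ((hasDerivAt_snd' hf).mul (hasDerivAt_snd' hg))
  have : v.1 * (g s).1 + (f s).1 * w.1 + (v.2 * (g s).2 + (f s).2 * w.2)
      = dot v (g s) + dot (f s) w := by simp [dot]; ring
  rw [← this]
  exact h1

/-- Characterization of infinitesimal rigid motions along a closed arc-length parameterized
`C²` curve: `Φ = a Γ^⊥ + b` iff `Φ'·τ = 0` and `(Φ'·n)' = 0`, where `τ = Γ'`, `n = τ^⊥`. -/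
theorem rigid_deformation_characterization
    (Γ Φ : ℝ → ℝ × ℝ)
    (hΓper : Function.Periodic Γ 1) (hΦper : Function.Periodic Φ 1)
    (hΓ : ContDiff ℝ 2 Γ) (hΦ : ContDiff ℝ 2 Φ)
    (harc : ∀ s, dot (deriv Γ s) (deriv Γ s) = 1) :
    (∃ (a : ℝ) (b : ℝ × ℝ), ∀ s, Φ s = a • perp (Γ s) + b) ↔
      ((∀ s, dot (deriv Φ s) (deriv Γ s) = 0) ∧
       (∀ s, deriv (fun u => dot (deriv Φ u) (perp (deriv Γ u))) s = 0)) := by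
  have hΓd : Differentiable ℝ Γ := hΓ.differentiable (by norm_num)
  have hΦd : Differentiable ℝ Φ := hΦ.differentiable (by norm_num)
  have hΓ2 : ContDiff ℝ 1 (deriv Γ) := by
    rw [show (2 : WithTop ℕ∞) = 1 + 1 by norm_num, contDiff_succ_iff_deriv] at hΓ
    exact hΓ.2.2
  have hΦ2 : ContDiff ℝ 1 (deriv Φ) := by
    rw [show (2 : WithTop ℕ∞) = 1 + 1 by norm_num, contDiff_succ_iff_deriv] at hΦ
    exact hΦ.2.2
  have hΓ'd : Differentiable ℝ (deriv Γ) := hΓ2.differentiable one_ne_zero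
  have hΦ'd : Differentiable ℝ (deriv Φ) := hΦ2.differentiable one_ne_zero
  constructor
  · rintro ⟨a, b, hab⟩
    have hderiv : ∀ s, deriv Φ s = a • perp (deriv Γ s) := by
      intro s
      have h1 : HasDerivAt (fun u => a • perp (Γ u) + b) (a • perp (deriv Γ s)) s :=
        ((hasDerivAt_perp' (hΓd s).hasDerivAt).const_smul a).add_const b
      have h2 : HasDerivAt Φ (a • perp (deriv Γ s)) s := by
        have : Φ = fun u => a • perp (Γ u) + b := funext hab
        rw [this]; exact h1
      exact h2.deriv
    constructor
    · intro s
      rw [hderiv s]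
      simp [dot, perp]
      ring
    · intro s
      have : (fun u => dot (deriv Φ u) (perp (deriv Γ u))) = fun _ => a := by
        funext u
        rw [hderiv u]
        have h := harc u
        simp only [dot, perp, Prod.smul_fst, Prod.smul_snd, smul_eq_mul] at h ⊢
        linear_combination a * h
      rw [this]
      simp
  · rintro ⟨h1, h2⟩
    set h : ℝ → ℝ := fun u => dot (deriv Φ u) (perp (deriv Γ u)) with hh
    have hhd : Differentiable ℝ h := by
      intro s
      exact (hasDerivAt_dot' (hΦ'd s).hasDerivAt (hasDerivAt_perp' (hΓ'd s).hasDerivAt)).differentiableAt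
    set a : ℝ := h 0 with ha
    have hconst : ∀ s, h s = a := fun s => is_const_of_deriv_eq_zero hhd h2 s 0
    -- pointwise decomposition: Φ' s = a • perp (Γ' s)
    have hdecomp : ∀ s, deriv Φ s = a • perp (deriv Γ s) := by
      intro s
      have e1 := h1 s
      have e2 := hconst s
      have e3 := harc s
      simp only [hh, dot, perp] at e1 e2 e3
      have : (deriv Φ s).1 = a * (-(deriv Γ s).2) ∧ (deriv Φ s).2 = a * (deriv Γ s).1 := by
        constructor
        · linear_combination (deriv Γ s).1 * e1 - (deriv Γ s).2 * e2 - (deriv Φ s).1 * e3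
        · linear_combination (deriv Γ s).2 * e1 + (deriv Γ s).1 * e2 - (deriv Φ s).2 * e3
      ext <;> simp [perp, this.1, this.2]
    set g : ℝ → ℝ × ℝ := fun u => Φ u - a • perp (Γ u) with hg
    have hgd : ∀ s, HasDerivAt g 0 s := by
      intro s
      have := (hΦd s).hasDerivAt.sub ((hasDerivAt_perp' (hΓd s).hasDerivAt).const_smul a)
      rw [← hdecomp s] at this
      rw [sub_self] at this
      exact this
    refine ⟨a, g 0, fun s => ?_⟩
    have : g s = g 0 :=
      is_const_of_deriv_eq_zero (fun u => (hgd u).differentiableAt) (fun u => (hgd u).deriv) s 0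
    have := this
    simp only [hg] at this
    linear_combination (norm := module) this
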